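/- Let a,b ≥ 3 and L = L(2,a,b) with canonical element c⃗ and dualizing element ω. Then the smallest positive integer n such that n·ω ∈ ℤ·x₁ is n = lcm(a,b); and for n = lcm(a,b) one has n·ω = m·x₁ with m = n − 2n/a − 2n/b. -/
import Mathlib


/-- The subgroup of relations defining L(a,b,c). -/
def LRel (a b c : ℕ) : AddSubgroup (ℤ × ℤ × ℤ) :=
  AddSubgroup.closure {((a : ℤ), -(b : ℤ), 0), ((0 : ℤ), (b : ℤ), -(c : ℤ))}

/-- The rank-one abelian group L(a,b,c) on generators x₁,x₂,x₃ with a·x₁ = b·x₂ = c·x₃. -/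
abbrev LGrp (a b c : ℕ) := (ℤ × ℤ × ℤ) ⧸ LRel a b c

def Lx1 (a b c : ℕ) : LGrp a b c := QuotientAddGroup.mk (1, 0, 0)
def Lx2 (a b c : ℕ) : LGrp a b c := QuotientAddGroup.mk (0, 1, 0)
def Lx3 (a b c : ℕ) : LGrp a b c := QuotientAddGroup.mk (0, 0, 1)

/-- Canonical element c⃗ = a·x₁. -/
def Lcan (a b c : ℕ) : LGrp a b c := (a : ℤ) • Lx1 a b c

/-- Dualizing element ω = c⃗ − (x₁+x₂+x₃). -/
def Lomega (a b c : ℕ) : LGrp a b c :=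
  Lcan a b c - (Lx1 a b c + Lx2 a b c + Lx3 a b c)

/-- Dominant element δ⃗ = c⃗ + 2ω. -/
def Ldelta (a b c : ℕ) : LGrp a b c := Lcan a b c + (2 : ℤ) • Lomega a b c

/-- The partial order on L given by the positive cone ℕx₁+ℕx₂+ℕx₃ : u ≤ v iff v−u ∈ ℕx₁+ℕx₂+ℕx₃. -/
def Lle (a b c : ℕ) (u v : LGrp a b c) : Prop :=
  ∃ n1 n2 n3 : ℕ,
    v - u = (n1 : ℤ) • Lx1 a b c + (n2 : ℤ) • Lx2 a b c + (n3 : ℤ) • Lx3 a b c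


lemma Lkey (a b : ℕ) (n m : ℤ) :
    ((n : ℤ) • Lomega 2 a b = m • Lx1 2 a b) ↔
    ∃ s t : ℤ, s • ((2:ℤ), -(a:ℤ), (0:ℤ)) + t • ((0:ℤ), (a:ℤ), -(b:ℤ)) = (m - n, n, n) := by
  have h1 : (n : ℤ) • Lomega 2 a b = QuotientAddGroup.mk (n, -n, -n) := by
    unfold Lomega Lcan Lx1 Lx2 Lx3
    rw [← QuotientAddGroup.mk_zsmul, ← QuotientAddGroup.mk_add, ← QuotientAddGroup.mk_add,
      ← QuotientAddGroup.mk_sub, ← QuotientAddGroup.mk_zsmul]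
    congr 1
    simp [Prod.ext_iff]
  have h2 : m • Lx1 2 a b = QuotientAddGroup.mk (m, 0, 0) := by
    unfold Lx1
    rw [← QuotientAddGroup.mk_zsmul]
    congr 1
    simp [Prod.ext_iff]
  rw [h1, h2, QuotientAddGroup.eq]
  unfold LRel
  rw [AddSubgroup.mem_closure_pair]
  constructor
  · rintro ⟨s, t, h⟩
    exact ⟨s, t, by convert h using 2 <;> simp_all [Prod.ext_iff] <;> omega⟩
  · rintro ⟨s, t, h⟩
    exact ⟨s, t, by convert h using 2 <;> simp_all [Prod.ext_iff] <;> omega⟩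

lemma Lkey_dvd (a b : ℕ) (n m : ℤ)
    (h : (n : ℤ) • Lomega 2 a b = m • Lx1 2 a b) : (a:ℤ) ∣ n ∧ (b:ℤ) ∣ n := by
  obtain ⟨s, t, hst⟩ := (Lkey a b n m).1 h
  rw [Prod.ext_iff, Prod.ext_iff] at hst
  simp only [Prod.fst_add, Prod.snd_add, Prod.smul_mk, smul_eq_mul] at hst
  obtain ⟨h1, h2, h3⟩ := hst
  exact ⟨⟨t - s, by linarith [h2]⟩, ⟨-t, by linarith [h3]⟩⟩

/-- For weight type (2,a,b) with a,b ≥ 3: the smallest positive n with n·ω ∈ ℤ·x₁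
    is n = lcm(a,b), and then n·ω = m·x₁ with m = n − 2n/a − 2n/b. -/
theorem omega_multiple_of_x1_2ab (a b : ℕ) (ha : 3 ≤ a) (hb : 3 ≤ b) :
    (∀ n : ℕ, 0 < n → (∃ m : ℤ, (n : ℤ) • Lomega 2 a b = m • Lx1 2 a b) →
      Nat.lcm a b ≤ n) ∧
    ((Nat.lcm a b : ℤ) • Lomega 2 a b =
      ((Nat.lcm a b : ℤ) - 2 * (Nat.lcm a b : ℤ) / a - 2 * (Nat.lcm a b : ℤ) / b)
        • Lx1 2 a b) := by
  constructor
  · rintro n hn ⟨m, hm⟩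
    obtain ⟨hda, hdb⟩ := Lkey_dvd a b n m hm
    rw [Int.natCast_dvd_natCast] at hda hdb
    exact Nat.le_of_dvd hn (Nat.lcm_dvd hda hdb)
  · set N : ℤ := (Nat.lcm a b : ℤ) with hN
    have hda : (a:ℤ) ∣ N := Int.natCast_dvd_natCast.2 (Nat.dvd_lcm_left a b)
    have hdb : (b:ℤ) ∣ N := Int.natCast_dvd_natCast.2 (Nat.dvd_lcm_right a b)
    set u : ℤ := N / a with hu
    set v : ℤ := N / b with hv
    have hau : (a:ℤ) * u = N := Int.mul_ediv_cancel' hda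
    have hbv : (b:ℤ) * v = N := Int.mul_ediv_cancel' hdb
    have h2a : 2 * N / a = 2 * u := by
      rw [hu, Int.mul_ediv_assoc 2 hda]
    have h2b : 2 * N / b = 2 * v := by
      rw [hv, Int.mul_ediv_assoc 2 hdb]
    rw [Lkey, h2a, h2b]
    refine ⟨-u - v, -v, ?_⟩
    rw [Prod.ext_iff, Prod.ext_iff]
    simp only [Prod.fst_add, Prod.snd_add, Prod.smul_mk, smul_eq_mul]
    refine ⟨by ring, by linarith, by linarith⟩
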